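/- Let (μ_n)_{n∈ℕ} be a sequence in 𝐌 and μ_∞ ∈ 𝐌 with W₁(μ_n, μ_∞) → 0. Then: (1) L_{μ_n} → L_{μ_∞} uniformly on [0,1]; (2) G(μ_n) → G(μ_∞); (3) H(μ_n) → H(μ_∞). -/

import Mathlib

open MeasureTheory Filter Topology

noncomputable section

/-- The mean of a measure on `ℝ`. -/
def mMean (μ : Measure ℝ) : ℝ := ∫ x, x ∂μ

/-- `μ ∈ 𝐌`: a Borel probability measure on `ℝ₊` (modelled as a measure on `ℝ` giving no
mass to negative numbers) with finite nonzero mean. -/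
def MemM (μ : Measure ℝ) : Prop :=
  IsProbabilityMeasure μ ∧ μ {x | x < 0} = 0 ∧ Integrable id μ ∧ 0 < mMean μ

/-- The cumulative distribution function `F_μ(x) = μ([0,x])`. -/
def cdfR (μ : Measure ℝ) (x : ℝ) : ℝ := (μ (Set.Icc 0 x)).toReal

/-- The quantile function `Q_μ(p) = inf {x ∈ ℝ₊ : F_μ(x) ≥ p}`. -/
def quant (μ : Measure ℝ) (p : ℝ) : ℝ := sInf {x : ℝ | 0 ≤ x ∧ p ≤ cdfR μ x}

/-- The Lorenz function `L_μ(p) = (∫_0^p Q_μ(t) dt) / m_μ`. -/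
def lorenz (μ : Measure ℝ) (p : ℝ) : ℝ := (∫ t in (0:ℝ)..p, quant μ t) / mMean μ

/-- The pseudo-Lorenz function `Λ_μ(p) = (∫_{[0,Q_μ(p)]} u dμ(u)) / m_μ` for `p ∈ [0,1)`,
with `Λ_μ(1) = 1`. -/
def pseudoLorenz (μ : Measure ℝ) (p : ℝ) : ℝ :=
  if p = 1 then 1 else (∫ u in Set.Icc (0:ℝ) (quant μ p), u ∂μ) / mMean μ

/-- The Gini coefficient `G(μ) = (∫∫ |x-y| d(μ⊗μ)) / (2 m_μ)`. -/
def gini (μ : Measure ℝ) : ℝ := (∫ z : ℝ × ℝ, |z.1 - z.2| ∂(μ.prod μ)) / (2 * mMean μ)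

/-- The Hoover coefficient `H(μ) = (∫ |x - m_μ| dμ) / (2 m_μ)`. -/
def hoover (μ : Measure ℝ) : ℝ := (∫ x, |x - mMean μ| ∂μ) / (2 * mMean μ)

/-- The Wasserstein-1 distance `W₁(μ,ν) = ∫_0^1 |Q_μ - Q_ν|`. -/
def W1 (μ ν : Measure ℝ) : ℝ := ∫ t in (0:ℝ)..1, |quant μ t - quant ν t|

/-- Weak convergence of a sequence of measures: convergence of integrals of all bounded
continuous functions. -/
def WeakCv (μs : ℕ → Measure ℝ) (ν : Measure ℝ) : Prop :=
  ∀ f : ℝ → ℝ, Continuous f → (∃ C : ℝ, ∀ x, |f x| ≤ C) →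
    Tendsto (fun n => ∫ x, f x ∂(μs n)) atTop (𝓝 (∫ x, f x ∂ν))

/-- Uniform integrability of a family of measures on `ℝ₊`:
`sup_i ∫_{(α,∞)} x dμ_i(x) → 0` as `α → +∞`. -/
def UnifInt {ι : Type*} (μs : ι → Measure ℝ) : Prop :=
  ∀ ε > (0:ℝ), ∃ A : ℝ, ∀ α ≥ A, ∀ i, (∫ x in Set.Ioi α, x ∂(μs i)) ≤ ε

end

section helpers

open Set MeasureTheory Filter Topology
open scoped ENNReal

variable {μ : Measure ℝ}

lemma quant_nonneg (μ : Measure ℝ) (p : ℝ) : 0 ≤ quant μ p :=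
  Real.sInf_nonneg fun x hx => hx.1

lemma cdfR_mono (μ : Measure ℝ) [IsFiniteMeasure μ] : Monotone (cdfR μ) := fun _ _ hxy =>
  ENNReal.toReal_mono (measure_ne_top μ _) (measure_mono (Icc_subset_Icc le_rfl hxy))

lemma cdfR_le_one (μ : Measure ℝ) [IsProbabilityMeasure μ] (x : ℝ) : cdfR μ x ≤ 1 :=
  (ENNReal.toReal_mono ENNReal.one_ne_top prob_le_one).trans_eq ENNReal.toReal_one

lemma exists_cdfR_ge (hμ : MemM μ) {p : ℝ} (hp : p < 1) : ∃ x, 0 ≤ x ∧ p ≤ cdfR μ x := by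
  haveI := hμ.1
  have hU : (⋃ n : ℕ, Icc (0:ℝ) n) = Ici 0 := by
    ext x
    simp only [mem_iUnion, mem_Icc, mem_Ici]
    exact ⟨fun ⟨n, h, _⟩ => h, fun hx => (exists_nat_ge x).imp fun n hn => ⟨hx, hn⟩⟩
  have hIio : μ (Iio 0) = 0 := hμ.2.1
  have hIci : μ (Ici 0) = 1 := by
    refine le_antisymm prob_le_one ?_
    have h2 : μ (Iio 0 ∪ Ici 0) ≤ μ (Iio 0) + μ (Ici 0) := measure_union_le _ _
    rwa [Iio_union_Ici, measure_univ, hIio, zero_add] at h2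
  have ht : Tendsto (fun n : ℕ => μ (Icc 0 n)) atTop (𝓝 1) := by
    have := tendsto_measure_iUnion_atTop (μ := μ)
      (s := fun n : ℕ => Icc (0:ℝ) n)
      (fun i j hij => Icc_subset_Icc le_rfl (by exact_mod_cast hij))
    rwa [hU, hIci] at this
  have hev : ∀ᶠ n : ℕ in atTop, ENNReal.ofReal p < μ (Icc 0 n) :=
    ht.eventually (eventually_gt_nhds (by exact_mod_cast ENNReal.ofReal_lt_one.2 hp))
  obtain ⟨n, hn⟩ := hev.exists
  exact ⟨n, Nat.cast_nonneg n,
    (ENNReal.ofReal_le_iff_le_toReal (measure_ne_top μ _)).1 hn.le⟩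

lemma le_cdfR_quant (hμ : MemM μ) {p : ℝ} (hp : p < 1) : p ≤ cdfR μ (quant μ p) := by
  haveI := hμ.1
  set S := {x : ℝ | 0 ≤ x ∧ p ≤ cdfR μ x} with hS
  have hne : S.Nonempty := exists_cdfR_ge hμ hp
  have hbd : BddBelow S := ⟨0, fun x hx => hx.1⟩
  have hq : quant μ p = sInf S := rfl
  have hq0 : 0 ≤ sInf S := le_csInf hne fun x hx => hx.1
  have hInter : (⋂ n : ℕ, Icc (0:ℝ) (sInf S + 1/(n+1))) = Icc 0 (sInf S) := by
    ext x
    simp only [mem_iInter, mem_Icc]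
    constructor
    · intro hx
      refine ⟨(hx 0).1, ?_⟩
      by_contra hlt
      push_neg at hlt
      obtain ⟨n, hn⟩ := exists_nat_one_div_lt (sub_pos.2 hlt)
      have := (hx n).2
      linarith
    · intro hx n
      have : (0:ℝ) < 1/(n+1) := by positivity
      exact ⟨hx.1, hx.2.trans (by linarith)⟩
  have hmeas : ∀ n : ℕ, NullMeasurableSet (Icc (0:ℝ) (sInf S + 1/(n+1))) μ :=
    fun n => measurableSet_Icc.nullMeasurableSet
  have hanti : Antitone (fun n : ℕ => Icc (0:ℝ) (sInf S + 1/(n+1))) := by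
    intro i j hij
    apply Icc_subset_Icc le_rfl
    have h1 : (i:ℝ) + 1 ≤ (j:ℝ) + 1 := by exact_mod_cast Nat.succ_le_succ hij
    have h2 : (0:ℝ) < (i:ℝ) + 1 := by positivity
    have := one_div_le_one_div_of_le h2 h1
    linarith
  have hseq := tendsto_measure_iInter_atTop hmeas hanti ⟨0, measure_ne_top μ _⟩
  rw [hInter] at hseq
  have hbound : ∀ n : ℕ, ENNReal.ofReal p ≤ μ (Icc 0 (sInf S + 1/(n+1))) := by
    intro n
    have hlt : sInf S < sInf S + 1/(n+1) := by
      have : (0:ℝ) < 1/(n+1) := by positivity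
      linarith
    obtain ⟨x, hxS, hx⟩ := (csInf_lt_iff hbd hne).1 hlt
    have hx2 : p ≤ cdfR μ (sInf S + 1/(n+1)) := hxS.2.trans (cdfR_mono μ hx.le)
    exact (ENNReal.ofReal_le_iff_le_toReal (measure_ne_top μ _)).2 hx2
  have hle : ENNReal.ofReal p ≤ μ (Icc 0 (sInf S)) :=
    ge_of_tendsto hseq (Eventually.of_forall hbound)
  rw [hq]
  exact (ENNReal.ofReal_le_iff_le_toReal (measure_ne_top μ _)).1 hle

lemma quant_le_iff (hμ : MemM μ) {p y : ℝ} (hp : p < 1) (hy : 0 ≤ y) :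
    quant μ p ≤ y ↔ p ≤ cdfR μ y := by
  haveI := hμ.1
  constructor
  · intro hle
    exact (le_cdfR_quant hμ hp).trans (cdfR_mono μ hle)
  · intro hle
    exact csInf_le ⟨0, fun x hx => hx.1⟩ ⟨hy, hle⟩

lemma quant_monoOn (hμ : MemM μ) : MonotoneOn (quant μ) (Iio 1) := by
  intro p _ q hq hpq
  refine csInf_le_csInf ⟨0, fun x hx => hx.1⟩ (exists_cdfR_ge hμ hq) ?_
  intro x hx
  exact ⟨hx.1, hpq.trans hx.2⟩

lemma quant_aemeasurable (hμ : MemM μ) :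
    AEMeasurable (quant μ) (volume.restrict (Ioo 0 1)) :=
  aemeasurable_restrict_of_monotoneOn measurableSet_Ioo
    ((quant_monoOn hμ).mono Ioo_subset_Iio_self)

lemma map_quant (hμ : MemM μ) : (volume.restrict (Ioo (0:ℝ) 1)).map (quant μ) = μ := by
  haveI := hμ.1
  have hQ := quant_aemeasurable hμ
  haveI : IsProbabilityMeasure ((volume.restrict (Ioo (0:ℝ) 1)).map (quant μ)) := by
    constructor
    rw [Measure.map_apply_of_aemeasurable hQ MeasurableSet.univ]
    simp [Real.volume_Ioo]
  refine Measure.ext_of_Iic _ μ fun y => ?_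
  rw [Measure.map_apply_of_aemeasurable hQ measurableSet_Iic,
    Measure.restrict_apply' measurableSet_Ioo]
  rcases lt_or_ge y 0 with hy | hy
  · have h1 : quant μ ⁻¹' Iic y ∩ Ioo 0 1 = ∅ := by
      ext t
      simp only [mem_inter_iff, mem_preimage, mem_Iic, mem_empty_iff_false, iff_false, not_and]
      intro hc
      exact absurd ((quant_nonneg μ t).trans hc) (not_le.2 hy)
    have h2 : μ (Iic y) = 0 :=
      measure_mono_null (fun x (hx : x ≤ y) => lt_of_le_of_lt hx hy) hμ.2.1
    simp [h1, h2]
  · have hset : quant μ ⁻¹' Iic y ∩ Ioo 0 1 = Ioo 0 1 ∩ Iic (cdfR μ y) := by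
      ext t
      simp only [mem_inter_iff, mem_preimage, mem_Iic, mem_Ioo]
      constructor
      · rintro ⟨hle, ht⟩
        exact ⟨ht, (quant_le_iff hμ ht.2 hy).1 hle⟩
      · rintro ⟨ht, hle⟩
        exact ⟨(quant_le_iff hμ ht.2 hy).2 hle, ht⟩
    have hc0 : 0 ≤ cdfR μ y := ENNReal.toReal_nonneg
    have hc1 : cdfR μ y ≤ 1 := cdfR_le_one μ y
    have hvol : volume (Ioo (0:ℝ) 1 ∩ Iic (cdfR μ y)) = ENNReal.ofReal (cdfR μ y) := by
      apply le_antisymm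
      · have hle : volume (Ioo (0:ℝ) 1 ∩ Iic (cdfR μ y)) ≤ volume (Ioc 0 (cdfR μ y)) :=
          measure_mono fun t ht => ⟨ht.1.1, ht.2⟩
        rwa [Real.volume_Ioc, sub_zero] at hle
      · have hle : volume (Ioo (0:ℝ) (cdfR μ y)) ≤ volume (Ioo (0:ℝ) 1 ∩ Iic (cdfR μ y)) :=
          measure_mono fun t ht => ⟨⟨ht.1, lt_of_lt_of_le ht.2 hc1⟩, ht.2.le⟩
        rwa [Real.volume_Ioo, sub_zero] at hle
    have hμIic : μ (Iic y) = ENNReal.ofReal (cdfR μ y) := by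
      have h1 : μ (Iic y) = μ (Icc 0 y) := by
        apply le_antisymm
        · have hsub : Iic y ⊆ {x | x < 0} ∪ Icc 0 y := by
            intro x (hx : x ≤ y)
            rcases lt_or_ge x 0 with hneg | hpos
            · exact Or.inl hneg
            · exact Or.inr ⟨hpos, hx⟩
          have hle : μ (Iic y) ≤ μ {x | x < 0} + μ (Icc 0 y) :=
            le_trans (measure_mono hsub) (measure_union_le _ _)
          rwa [hμ.2.1, zero_add] at hle
        · exact measure_mono (fun x hx => hx.2)
      rw [h1, cdfR, ENNReal.ofReal_toReal (measure_ne_top μ _)]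
    rw [hset, hvol, hμIic]

lemma integral_eq_integral_quant (hμ : MemM μ) {g : ℝ → ℝ} (hg : AEStronglyMeasurable g μ) :
    ∫ x, g x ∂μ = ∫ t in Ioo (0:ℝ) 1, g (quant μ t) := by
  conv_lhs => rw [← map_quant hμ]
  rw [← map_quant hμ] at hg
  exact integral_map (quant_aemeasurable hμ) hg

lemma integrable_quant_comp (hμ : MemM μ) {g : ℝ → ℝ} (hg : Integrable g μ) :
    Integrable (fun t => g (quant μ t)) (volume.restrict (Ioo (0:ℝ) 1)) := by
  rw [← map_quant hμ] at hg
  exact (integrable_map_measure hg.aestronglyMeasurable (quant_aemeasurable hμ)).1 hg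

lemma mMean_eq (hμ : MemM μ) : mMean μ = ∫ t in Ioo (0:ℝ) 1, quant μ t := by
  have h := integral_eq_integral_quant (g := fun x => x) hμ aestronglyMeasurable_id
  exact h

lemma integrable_quantI (hμ : MemM μ) : IntegrableOn (quant μ) (Ioo 0 1) volume := by
  have h := integrable_quant_comp (g := fun x => x) hμ ?_
  · exact h
  · simpa [Function.id_def] using hμ.2.2.1

end helpers

section helpers2

open Set MeasureTheory Filter Topology
open scoped ENNReal

variable {μ ν : Measure ℝ}

lemma eta_prob : IsProbabilityMeasure (volume.restrict (Ioo (0:ℝ) 1)) := by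
  constructor
  rw [Measure.restrict_apply_univ]
  simp [Real.volume_Ioo]

lemma integrable_fst_comp {ρ : Measure ℝ} [IsProbabilityMeasure ρ] {g : ℝ → ℝ}
    (hg : Integrable g ρ) :
    Integrable (fun z : ℝ × ℝ => g z.1) (ρ.prod ρ) := by
  have hm : (ρ.prod ρ).map Prod.fst = ρ := by
    rw [Measure.map_fst_prod, measure_univ, one_smul]
  have h2 : Integrable g ((ρ.prod ρ).map Prod.fst) := by rwa [hm]
  refine (integrable_map_measure ?_ measurable_fst.aemeasurable).1 h2
  rw [hm]; exact hg.aestronglyMeasurable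

lemma integrable_snd_comp {ρ : Measure ℝ} [IsProbabilityMeasure ρ] {g : ℝ → ℝ}
    (hg : Integrable g ρ) :
    Integrable (fun z : ℝ × ℝ => g z.2) (ρ.prod ρ) := by
  have hm : (ρ.prod ρ).map Prod.snd = ρ := by
    rw [Measure.map_snd_prod, measure_univ, one_smul]
  have h2 : Integrable g ((ρ.prod ρ).map Prod.snd) := by rwa [hm]
  refine (integrable_map_measure ?_ measurable_snd.aemeasurable).1 h2
  rw [hm]; exact hg.aestronglyMeasurable

lemma integral_fst_comp {ρ : Measure ℝ} [IsProbabilityMeasure ρ] {g : ℝ → ℝ}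
    (hg : AEStronglyMeasurable g ρ) :
    ∫ z : ℝ × ℝ, g z.1 ∂(ρ.prod ρ) = ∫ t, g t ∂ρ := by
  have hm : (ρ.prod ρ).map Prod.fst = ρ := by
    rw [Measure.map_fst_prod, measure_univ, one_smul]
  conv_rhs => rw [← hm]
  refine (integral_map measurable_fst.aemeasurable ?_).symm
  rw [hm]; exact hg

lemma integral_snd_comp {ρ : Measure ℝ} [IsProbabilityMeasure ρ] {g : ℝ → ℝ}
    (hg : AEStronglyMeasurable g ρ) :
    ∫ z : ℝ × ℝ, g z.2 ∂(ρ.prod ρ) = ∫ t, g t ∂ρ := by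
  have hm : (ρ.prod ρ).map Prod.snd = ρ := by
    rw [Measure.map_snd_prod, measure_univ, one_smul]
  conv_rhs => rw [← hm]
  refine (integral_map measurable_snd.aemeasurable ?_).symm
  rw [hm]; exact hg

lemma abs_sub_le_abs_add_abs (a b : ℝ) : |a - b| ≤ |a| + |b| := by
  have h := abs_add_le a (-b)
  rwa [abs_neg, ← sub_eq_add_neg] at h

lemma integrable_abs_sub_prod [IsProbabilityMeasure μ] (hμi : Integrable (fun x : ℝ => x) μ) :
    Integrable (fun z : ℝ × ℝ => |z.1 - z.2|) (μ.prod μ) := by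
  have h1 : Integrable (fun z : ℝ × ℝ => z.1) (μ.prod μ) := integrable_fst_comp hμi
  have h2 : Integrable (fun z : ℝ × ℝ => z.2) (μ.prod μ) := integrable_snd_comp hμi
  refine Integrable.mono' (h1.abs.add h2.abs)
    ((continuous_fst.sub continuous_snd).abs.aestronglyMeasurable) ?_
  refine Eventually.of_forall fun z => ?_
  rw [Real.norm_eq_abs, abs_abs]
  exact abs_sub_le_abs_add_abs z.1 z.2

lemma map_mk_quant (hμ : MemM μ) {Q' : ℝ → ℝ}
    (hae : quant μ =ᵐ[volume.restrict (Ioo (0:ℝ) 1)] Q') :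
    (volume.restrict (Ioo (0:ℝ) 1)).map Q' = μ := by
  rw [← Measure.map_congr hae, map_quant hμ]

lemma prod_map_mk_quant (hμ : MemM μ) {Q' : ℝ → ℝ} (hQ'm : Measurable Q')
    (hae : quant μ =ᵐ[volume.restrict (Ioo (0:ℝ) 1)] Q') :
    ((volume.restrict (Ioo (0:ℝ) 1)).prod
      (volume.restrict (Ioo (0:ℝ) 1))).map (Prod.map Q' Q') = μ.prod μ := by
  rw [← map_mk_quant hμ hae]
  exact (Measure.map_prod_map _ _ hQ'm hQ'm).symm

lemma gini_num_eq (hμ : MemM μ) {Q' : ℝ → ℝ} (hQ'm : Measurable Q')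
    (hae : quant μ =ᵐ[volume.restrict (Ioo (0:ℝ) 1)] Q') :
    ∫ z : ℝ × ℝ, |z.1 - z.2| ∂(μ.prod μ) =
      ∫ z : ℝ × ℝ, |Q' z.1 - Q' z.2|
        ∂((volume.restrict (Ioo (0:ℝ) 1)).prod (volume.restrict (Ioo (0:ℝ) 1))) := by
  haveI := hμ.1
  rw [← prod_map_mk_quant hμ hQ'm hae,
    integral_map (hQ'm.prodMap hQ'm).aemeasurable (f := fun z : ℝ × ℝ => |z.1 - z.2|)
      (continuous_fst.sub continuous_snd).abs.aestronglyMeasurable]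
  rfl

lemma gini_num_integrable (hμ : MemM μ) {Q' : ℝ → ℝ} (hQ'm : Measurable Q')
    (hae : quant μ =ᵐ[volume.restrict (Ioo (0:ℝ) 1)] Q') :
    Integrable (fun z : ℝ × ℝ => |Q' z.1 - Q' z.2|)
      ((volume.restrict (Ioo (0:ℝ) 1)).prod (volume.restrict (Ioo (0:ℝ) 1))) := by
  haveI := hμ.1
  have hint : Integrable (fun z : ℝ × ℝ => |z.1 - z.2|) (μ.prod μ) := by
    apply integrable_abs_sub_prod
    simpa [Function.id_def] using hμ.2.2.1
  rw [← prod_map_mk_quant hμ hQ'm hae] at hint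
  refine (integrable_map_measure ?_ (hQ'm.prodMap hQ'm).aemeasurable).1 hint
  rw [prod_map_mk_quant hμ hQ'm hae]
  exact (continuous_fst.sub continuous_snd).abs.aestronglyMeasurable

end helpers2

section helpers3
open Set MeasureTheory Filter Topology

lemma abs_abs_sub_le (a b c d : ℝ) : |(|a - b|) - (|c - d|)| ≤ |a - c| + |b - d| := by
  have h1 : |(|a - b|) - (|c - d|)| ≤ |(a - b) - (c - d)| := abs_abs_sub_abs_le_abs_sub _ _
  have h2 : (a - b) - (c - d) = (a - c) - (b - d) := by ring
  rw [h2] at h1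
  exact h1.trans (abs_sub_le_abs_add_abs _ _)

end helpers3

open Set


/-- If `W₁(μ_n, μ_∞) → 0` then the Lorenz curves converge uniformly on
`[0,1]` and the Gini and Hoover coefficients converge. -/
theorem lorenz_gini_hoover_tendsto_of_W1 (μs : ℕ → Measure ℝ) (ν : Measure ℝ)
    (h : ∀ n, MemM (μs n)) (hν : MemM ν)
    (hW : Tendsto (fun n => W1 (μs n) ν) atTop (𝓝 0)) :
    TendstoUniformlyOn (fun n p => lorenz (μs n) p) (lorenz ν) atTop (Set.Icc 0 1) ∧
    Tendsto (fun n => gini (μs n)) atTop (𝓝 (gini ν)) ∧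
    Tendsto (fun n => hoover (μs n)) atTop (𝓝 (hoover ν)) := by
  classical
  haveI hPν := hν.1
  haveI hPn : ∀ n, IsProbabilityMeasure (μs n) := fun n => (h n).1
  haveI hP : IsProbabilityMeasure (volume.restrict (Ioo (0:ℝ) 1)) := eta_prob
  have hm0 : 0 < mMean ν := hν.2.2.2
  have hmn0 : ∀ n, 0 < mMean (μs n) := fun n => (h n).2.2.2
  have hres : volume.restrict (Ioc (0:ℝ) 1) = volume.restrict (Ioo (0:ℝ) 1) :=
    (Measure.restrict_congr_set Ioo_ae_eq_Ioc).symm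
  have hIn : ∀ n, IntegrableOn (quant (μs n)) (Ioo 0 1) volume :=
    fun n => integrable_quantI (h n)
  have hIν : IntegrableOn (quant ν) (Ioo 0 1) volume := integrable_quantI hν
  have hW1eq : ∀ n, W1 (μs n) ν = ∫ t in Ioo (0:ℝ) 1, |quant (μs n) t - quant ν t| := by
    intro n
    rw [W1, intervalIntegral.integral_of_le zero_le_one, hres]
  -- mean convergence
  have habs_int : ∀ n, |mMean (μs n) - mMean ν| ≤ W1 (μs n) ν := by
    intro n
    rw [mMean_eq (h n), mMean_eq hν, hW1eq n, ← integral_sub (hIn n) hIν]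
    simpa [Real.norm_eq_abs] using
      norm_integral_le_integral_norm (μ := volume.restrict (Ioo (0:ℝ) 1))
        (fun t => quant (μs n) t - quant ν t)
  have hmean : Tendsto (fun n => mMean (μs n)) atTop (𝓝 (mMean ν)) := by
    rw [tendsto_iff_dist_tendsto_zero]
    refine squeeze_zero (fun n => dist_nonneg) (fun n => ?_) hW
    rw [Real.dist_eq]
    exact habs_int n
  have hmeandist : Tendsto (fun n => |mMean (μs n) - mMean ν|) atTop (𝓝 0) := by
    simpa [Real.dist_eq] using tendsto_iff_dist_tendsto_zero.1 hmean
  -- Lorenz part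
  have hIoc1n : ∀ n, IntegrableOn (quant (μs n)) (Ioc 0 1) volume := by
    intro n; rw [IntegrableOn, hres]; exact hIn n
  have hIoc1ν : IntegrableOn (quant ν) (Ioc 0 1) volume := by
    rw [IntegrableOn, hres]; exact hIν
  have hlor : TendstoUniformlyOn (fun n p => lorenz (μs n) p) (lorenz ν) atTop (Set.Icc 0 1) := by
    rw [Metric.tendstoUniformlyOn_iff]
    intro ε hε
    have hε8 : (0:ℝ) < mMean ν * ε / 8 := by positivity
    have hev1 : ∀ᶠ n in atTop, W1 (μs n) ν < mMean ν * ε / 8 :=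
      hW.eventually (eventually_lt_nhds hε8)
    have hev2 : ∀ᶠ n in atTop, |mMean (μs n) - mMean ν| < mMean ν * ε / 8 :=
      hmeandist.eventually (eventually_lt_nhds hε8)
    have hev3 : ∀ᶠ n in atTop, mMean ν / 2 < mMean (μs n) :=
      hmean.eventually (eventually_gt_nhds (half_lt_self hm0))
    filter_upwards [hev1, hev2, hev3] with n hw hdm hm2
    intro p hp
    have hLn : lorenz (μs n) p = (∫ t in Ioc (0:ℝ) p, quant (μs n) t) / mMean (μs n) := by
      rw [lorenz, intervalIntegral.integral_of_le hp.1]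
    have hLν : lorenz ν p = (∫ t in Ioc (0:ℝ) p, quant ν t) / mMean ν := by
      rw [lorenz, intervalIntegral.integral_of_le hp.1]
    rw [Real.dist_eq, hLν, hLn]
    have hIn' : IntegrableOn (quant (μs n)) (Ioc 0 p) volume :=
      (hIoc1n n).mono_set (Ioc_subset_Ioc_right hp.2)
    have hIν' : IntegrableOn (quant ν) (Ioc 0 p) volume :=
      hIoc1ν.mono_set (Ioc_subset_Ioc_right hp.2)
    have h3 : ∫ t in Ioc (0:ℝ) 1, |quant ν t - quant (μs n) t| = W1 (μs n) ν := by
      rw [hW1eq n, hres]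
      exact integral_congr_ae (Eventually.of_forall fun t => abs_sub_comm _ _)
    have hnum : |(∫ t in Ioc (0:ℝ) p, quant ν t) - ∫ t in Ioc (0:ℝ) p, quant (μs n) t|
        ≤ W1 (μs n) ν := by
      rw [← integral_sub hIν' hIn']
      have h1 : |∫ t in Ioc (0:ℝ) p, (quant ν t - quant (μs n) t)|
          ≤ ∫ t in Ioc (0:ℝ) p, |quant ν t - quant (μs n) t| := by
        simpa [Real.norm_eq_abs] using
          norm_integral_le_integral_norm (μ := volume.restrict (Ioc (0:ℝ) p))
            (fun t => quant ν t - quant (μs n) t)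
      have h2 : ∫ t in Ioc (0:ℝ) p, |quant ν t - quant (μs n) t|
          ≤ ∫ t in Ioc (0:ℝ) 1, |quant ν t - quant (μs n) t| := by
        apply setIntegral_mono_set
        · exact (hIoc1ν.sub (hIoc1n n)).abs
        · exact Eventually.of_forall fun t => abs_nonneg _
        · exact HasSubset.Subset.eventuallyLE (Ioc_subset_Ioc_right hp.2)
      exact h1.trans (h2.trans (le_of_eq h3))
    have hN0 : 0 ≤ ∫ t in Ioc (0:ℝ) p, quant ν t :=
      integral_nonneg fun t => quant_nonneg ν t
    have hNm : ∫ t in Ioc (0:ℝ) p, quant ν t ≤ mMean ν := by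
      have h2 : ∫ t in Ioc (0:ℝ) p, quant ν t ≤ ∫ t in Ioc (0:ℝ) 1, quant ν t := by
        apply setIntegral_mono_set hIoc1ν
        · exact Eventually.of_forall fun t => quant_nonneg ν t
        · exact HasSubset.Subset.eventuallyLE (Ioc_subset_Ioc_right hp.2)
      have h3 : ∫ t in Ioc (0:ℝ) 1, quant ν t = mMean ν := by
        rw [mMean_eq hν, hres]
      exact h2.trans (le_of_eq h3)
    set a := ∫ t in Ioc (0:ℝ) p, quant ν t with ha
    set b := ∫ t in Ioc (0:ℝ) p, quant (μs n) t with hb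
    set c := mMean ν with hc
    set d := mMean (μs n) with hd
    have hcpos : 0 < c := hm0
    have hdpos : 0 < d := hmn0 n
    have key : a / c - b / d = (a - b) / d + (a * (d - c)) / (c * d) := by
      field_simp
      ring
    rw [key]
    have habs : |(a - b) / d + (a * (d - c)) / (c * d)|
        ≤ |a - b| / d + (a * |d - c|) / (c * d) := by
      refine (abs_add_le _ _).trans ?_
      rw [abs_div, abs_div, abs_mul, abs_of_pos hdpos, abs_of_pos (mul_pos hcpos hdpos),
        abs_of_nonneg hN0]
    refine lt_of_le_of_lt habs ?_
    have t1 : |a - b| / d ≤ (c * ε / 8) / (c / 2) :=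
      div_le_div₀ (by positivity) (hnum.trans hw.le) (by positivity) hm2.le
    have t2 : (a * |d - c|) / (c * d) ≤ (c * (c * ε / 8)) / (c * (c / 2)) := by
      refine div_le_div₀ (by positivity) ?_ (by positivity) ?_
      · exact mul_le_mul hNm hdm.le (abs_nonneg _) hcpos.le
      · exact mul_le_mul_of_nonneg_left hm2.le hcpos.le
    have e1 : (c * ε / 8) / (c / 2) = ε / 4 := by
      field_simp
      ring
    have e2 : (c * (c * ε / 8)) / (c * (c / 2)) = ε / 4 := by
      field_simp
      ring
    rw [e1] at t1
    rw [e2] at t2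
    linarith
  -- measurable versions of quantile functions
  have hexn : ∀ n, ∃ Q' : ℝ → ℝ, Measurable Q' ∧
      quant (μs n) =ᵐ[volume.restrict (Ioo (0:ℝ) 1)] Q' :=
    fun n => ⟨(quant_aemeasurable (h n)).mk _, (quant_aemeasurable (h n)).measurable_mk,
      (quant_aemeasurable (h n)).ae_eq_mk⟩
  choose Q' hQ'm hQ'ae using hexn
  obtain ⟨R', hR'm, hR'ae⟩ : ∃ R' : ℝ → ℝ, Measurable R' ∧
      quant ν =ᵐ[volume.restrict (Ioo (0:ℝ) 1)] R' :=
    ⟨(quant_aemeasurable hν).mk _, (quant_aemeasurable hν).measurable_mk,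
      (quant_aemeasurable hν).ae_eq_mk⟩
  have hIQ' : ∀ n, Integrable (Q' n) (volume.restrict (Ioo (0:ℝ) 1)) :=
    fun n => (hIn n).congr (hQ'ae n)
  have hIR' : Integrable R' (volume.restrict (Ioo (0:ℝ) 1)) := hIν.congr hR'ae
  have hW1eq' : ∀ n, W1 (μs n) ν = ∫ t in Ioo (0:ℝ) 1, |Q' n t - R' t| := by
    intro n
    rw [hW1eq n]
    apply integral_congr_ae
    filter_upwards [hQ'ae n, hR'ae] with t h1 h2
    rw [h1, h2]
  -- Gini part
  have hGnum : Tendsto (fun n => ∫ z : ℝ × ℝ, |z.1 - z.2| ∂((μs n).prod (μs n))) atTop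
      (𝓝 (∫ z : ℝ × ℝ, |z.1 - z.2| ∂(ν.prod ν))) := by
    rw [tendsto_iff_dist_tendsto_zero]
    refine squeeze_zero (fun n => dist_nonneg) (fun n => ?_)
      (by simpa using hW.const_mul 2)
    rw [Real.dist_eq, gini_num_eq (h n) (hQ'm n) (hQ'ae n), gini_num_eq hν hR'm hR'ae]
    have hint1 := gini_num_integrable (h n) (hQ'm n) (hQ'ae n)
    have hint2 := gini_num_integrable hν hR'm hR'ae
    have hintf : Integrable (fun t => |Q' n t - R' t|) (volume.restrict (Ioo (0:ℝ) 1)) :=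
      ((hIQ' n).sub hIR').abs
    have hint3 : Integrable
        (fun z : ℝ × ℝ => |Q' n z.1 - R' z.1| + |Q' n z.2 - R' z.2|)
        ((volume.restrict (Ioo (0:ℝ) 1)).prod (volume.restrict (Ioo (0:ℝ) 1))) :=
      (integrable_fst_comp hintf).add (integrable_snd_comp hintf)
    rw [← integral_sub hint1 hint2]
    have h1 : |∫ z : ℝ × ℝ, (|Q' n z.1 - Q' n z.2| - |R' z.1 - R' z.2|)
          ∂((volume.restrict (Ioo (0:ℝ) 1)).prod (volume.restrict (Ioo (0:ℝ) 1)))|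
        ≤ ∫ z : ℝ × ℝ, |(|Q' n z.1 - Q' n z.2|) - (|R' z.1 - R' z.2|)|
          ∂((volume.restrict (Ioo (0:ℝ) 1)).prod (volume.restrict (Ioo (0:ℝ) 1))) := by
      simpa [Real.norm_eq_abs] using
        norm_integral_le_integral_norm
          (μ := (volume.restrict (Ioo (0:ℝ) 1)).prod (volume.restrict (Ioo (0:ℝ) 1)))
          (fun z : ℝ × ℝ => |Q' n z.1 - Q' n z.2| - |R' z.1 - R' z.2|)
    refine h1.trans ?_
    have h2 : ∫ z : ℝ × ℝ, |(|Q' n z.1 - Q' n z.2|) - (|R' z.1 - R' z.2|)|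
          ∂((volume.restrict (Ioo (0:ℝ) 1)).prod (volume.restrict (Ioo (0:ℝ) 1)))
        ≤ ∫ z : ℝ × ℝ, (|Q' n z.1 - R' z.1| + |Q' n z.2 - R' z.2|)
          ∂((volume.restrict (Ioo (0:ℝ) 1)).prod (volume.restrict (Ioo (0:ℝ) 1))) := by
      refine integral_mono (hint1.sub hint2).abs hint3 ?_
      intro z
      exact abs_abs_sub_le _ _ _ _
    refine h2.trans ?_
    rw [integral_add (integrable_fst_comp hintf) (integrable_snd_comp hintf),
      integral_fst_comp hintf.aestronglyMeasurable,
      integral_snd_comp hintf.aestronglyMeasurable, ← hW1eq' n]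
    linarith [hW1eq' n]
  have hgini : Tendsto (fun n => gini (μs n)) atTop (𝓝 (gini ν)) := by
    have hd : Tendsto (fun n => 2 * mMean (μs n)) atTop (𝓝 (2 * mMean ν)) :=
      hmean.const_mul 2
    have := hGnum.div hd (by positivity)
    simpa [gini, Pi.div_def] using this
  -- Hoover part
  have hHn : ∀ n, ∫ x, |x - mMean (μs n)| ∂(μs n)
      = ∫ t in Ioo (0:ℝ) 1, |quant (μs n) t - mMean (μs n)| := fun n =>
    integral_eq_integral_quant (h n)
      ((continuous_id.sub continuous_const).abs.aestronglyMeasurable)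
  have hHν : ∫ x, |x - mMean ν| ∂ν = ∫ t in Ioo (0:ℝ) 1, |quant ν t - mMean ν| :=
    integral_eq_integral_quant hν
      ((continuous_id.sub continuous_const).abs.aestronglyMeasurable)
  have hHnum : Tendsto (fun n => ∫ x, |x - mMean (μs n)| ∂(μs n)) atTop
      (𝓝 (∫ x, |x - mMean ν| ∂ν)) := by
    rw [tendsto_iff_dist_tendsto_zero]
    refine squeeze_zero (fun n => dist_nonneg) (fun n => ?_)
      (by simpa using hW.add hmeandist)
    rw [Real.dist_eq, hHn n, hHν]
    have hint1 : Integrable (fun t => |quant (μs n) t - mMean (μs n)|)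
        (volume.restrict (Ioo (0:ℝ) 1)) := ((hIn n).sub (integrable_const _)).abs
    have hint2 : Integrable (fun t => |quant ν t - mMean ν|)
        (volume.restrict (Ioo (0:ℝ) 1)) := (hIν.sub (integrable_const _)).abs
    have hint3 : Integrable
        (fun t => |quant (μs n) t - quant ν t| + |mMean (μs n) - mMean ν|)
        (volume.restrict (Ioo (0:ℝ) 1)) :=
      ((hIn n).sub hIν).abs.add (integrable_const _)
    rw [← integral_sub hint1 hint2]
    have h1 : |∫ t in Ioo (0:ℝ) 1, (|quant (μs n) t - mMean (μs n)| - |quant ν t - mMean ν|)|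
        ≤ ∫ t in Ioo (0:ℝ) 1, |(|quant (μs n) t - mMean (μs n)|) - (|quant ν t - mMean ν|)| := by
      simpa [Real.norm_eq_abs] using
        norm_integral_le_integral_norm (μ := volume.restrict (Ioo (0:ℝ) 1))
          (fun t => |quant (μs n) t - mMean (μs n)| - |quant ν t - mMean ν|)
    refine h1.trans ?_
    have h2 : ∫ t in Ioo (0:ℝ) 1, |(|quant (μs n) t - mMean (μs n)|) - (|quant ν t - mMean ν|)|
        ≤ ∫ t in Ioo (0:ℝ) 1, (|quant (μs n) t - quant ν t| + |mMean (μs n) - mMean ν|) := by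
      refine integral_mono (hint1.sub hint2).abs hint3 ?_
      intro t
      exact abs_abs_sub_le _ _ _ _
    refine h2.trans ?_
    have hintd : Integrable (fun t => |quant (μs n) t - quant ν t|)
        (volume.restrict (Ioo (0:ℝ) 1)) := ((hIn n).sub hIν).abs
    rw [integral_add hintd (integrable_const _), integral_const]
    simp only [measure_univ, probReal_univ, smul_eq_mul, one_mul]
    rw [← hW1eq n]
  have hhoover : Tendsto (fun n => hoover (μs n)) atTop (𝓝 (hoover ν)) := by
    have hd : Tendsto (fun n => 2 * mMean (μs n)) atTop (𝓝 (2 * mMean ν)) :=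
      hmean.const_mul 2
    have := hHnum.div hd (by positivity)
    simpa [hoover, Pi.div_def] using this
  exact ⟨hlor, hgini, hhoover⟩
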